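/- A bipartite density matrix whose marginal on one subsystem is pure must be a product state; in particular it is uncorrelated with the other subsystem: let m and n be finite types and let ρ be a complex matrix indexed by (m × n) × (m × n) that is positive semidefinite with trace 1. Define the marginals ρ_A(i, i') = Σ_{j} ρ((i,j), (i',j)) (a matrix indexed by m × m) and ρ_B(j, j') = Σ_{i} ρ((i,j), (i,j')) (a matrix indexed by n × n). If there exists a vector v ∈ ℂ^m with unit norm such that ρ_A = v·v† (i.e. ρ_A(i,i') = v(i)·conj(v(i')) for all i, i'), then ρ equals the Kronecker product ρ_A ⊗ₖ ρ_B, i.e. ρ((i,j), (i',j')) = ρ_A(i,i') · ρ_B(j,j') for all i, i', j, j'. -/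

import Mathlib

open Matrix
open scoped ComplexOrder Kronecker

-- aux: trace of AᴴA zero implies A = 0
lemma aux_trace_zero {α β : Type*} [Fintype α] [Fintype β]
    (A : Matrix α β ℂ) (h : (Aᴴ * A).trace = 0) : A = 0 := by
  have htr : (Aᴴ * A).trace = ∑ j : β, (star (fun i => A i j)) ⬝ᵥ (fun i => A i j) := by
    simp [Matrix.trace, Matrix.diag, Matrix.mul_apply, Matrix.conjTranspose_apply,
      dotProduct, Pi.star_apply]
  rw [htr] at h
  have hz : ∀ j : β, (star (fun i => A i j)) ⬝ᵥ (fun i => A i j) = 0 := by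
    intro j
    have := (Finset.sum_eq_zero_iff_of_nonneg (fun j _ =>
      dotProduct_star_self_nonneg (fun i => A i j))).mp h
    exact this j (Finset.mem_univ j)
  ext i j
  have := dotProduct_star_self_eq_zero.mp (hz j)
  exact congrFun this i

/-- a bipartite density matrix whose marginal on the first
subsystem is a pure state v·v† must be the product of its marginals. -/
theorem pure_marginal_implies_product {m n : Type*}
    [Fintype m] [DecidableEq m] [Fintype n] [DecidableEq n]
    (ρ : Matrix (m × n) (m × n) ℂ)
    (hpos : ρ.PosSemidef) (htr : ρ.trace = 1)
    (v : m → ℂ) (hv : star v ⬝ᵥ v = 1)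
    (hA : ∀ i i' : m, (∑ j : n, ρ (i, j) (i', j)) = v i * star (v i')) :
    ∀ (i i' : m) (j j' : n),
      ρ (i, j) (i', j') =
        (∑ l : n, ρ (i, l) (i', l)) * (∑ k : m, ρ (k, j) (k, j')) := by
  set Q : Matrix m m ℂ := Matrix.vecMulVec v (star v) with hQdef
  have hvv : ∑ k : m, star (v k) * v k = 1 := hv
  have hQQ : Q * Q = Q := by
    ext i i'
    simp only [Matrix.mul_apply, hQdef, Matrix.vecMulVec_apply, Pi.star_apply]
    calc ∑ k, v i * star (v k) * (v k * star (v i'))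
        = (v i * star (v i')) * ∑ k, star (v k) * v k := by
          rw [Finset.mul_sum]; congr 1; ext k; ring
      _ = v i * star (v i') := by rw [hvv, mul_one]
  have hQH : Qᴴ = Q := by
    ext i i'
    simp [hQdef, Matrix.conjTranspose_apply, Matrix.vecMulVec_apply, mul_comm]
  -- trace of ρ * (Q ⊗ₖ 1)
  have hQtr : (ρ * (Q ⊗ₖ (1 : Matrix n n ℂ))).trace = 1 := by
    have h1 : (ρ * (Q ⊗ₖ (1 : Matrix n n ℂ))).trace
        = ∑ i : m, ∑ k : m, (∑ j : n, ρ (i, j) (k, j)) * Q k i := by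
      simp only [Matrix.trace, Matrix.diag, Matrix.mul_apply, Matrix.kroneckerMap_apply,
        Matrix.one_apply, Fintype.sum_prod_type, mul_ite, mul_one, mul_zero,
        Finset.sum_ite_eq', Finset.mem_univ, if_true]
      simp_rw [Finset.sum_mul]
      exact Finset.sum_congr rfl fun i _ => Finset.sum_comm
    rw [h1]
    have h2 : ∀ i k : m, (∑ j : n, ρ (i, j) (k, j)) * Q k i
        = (v i * star (v i)) * (v k * star (v k)) := by
      intro i k
      rw [hA i k]
      simp only [hQdef, Matrix.vecMulVec_apply, Pi.star_apply]
      ring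
    simp_rw [h2]
    have h3 : ∑ i : m, v i * star (v i) = 1 := by
      rw [← hvv]; exact Finset.sum_congr rfl fun i _ => mul_comm _ _
    rw [← Finset.sum_mul_sum, h3, one_mul]
  -- the projector N onto the complement of v, tensored with identity
  set N : Matrix (m × n) (m × n) ℂ := (1 - Q) ⊗ₖ (1 : Matrix n n ℂ) with hNdef
  have hN1 : N = 1 - Q ⊗ₖ (1 : Matrix n n ℂ) := by
    ext ⟨a, b⟩ ⟨k, l⟩
    simp only [hNdef, Matrix.kroneckerMap_apply, Matrix.sub_apply, Matrix.one_apply,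
      Prod.mk.injEq, sub_mul]
    by_cases h1 : a = k <;> by_cases h2 : b = l <;> simp [h1, h2]
  have hNH : Nᴴ = N := by
    ext ⟨a, b⟩ ⟨k, l⟩
    simp only [hNdef, Matrix.conjTranspose_apply, Matrix.kroneckerMap_apply,
      Matrix.sub_apply, Matrix.one_apply, hQdef, Matrix.vecMulVec_apply, Pi.star_apply]
    by_cases h1 : a = k <;> by_cases h2 : b = l <;> simp [h1, h2, mul_comm, eq_comm]
  have hNN : N * N = N := by
    have hP : (1 - Q) * (1 - Q) = 1 - Q := by
      simp only [Matrix.mul_sub, Matrix.sub_mul, Matrix.mul_one, Matrix.one_mul, hQQ]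
      abel
    rw [hNdef, ← Matrix.mul_kronecker_mul, hP, Matrix.one_mul]
  have hρN : ρ * N = 0 := by
    obtain ⟨B, hB⟩ : ∃ B : Matrix (m × n) (m × n) ℂ, ρ = Bᴴ * B := by
      open scoped MatrixOrder in exact CStarAlgebra.nonneg_iff_eq_star_mul_self.mp hpos.nonneg
    have h0 : ((B * N)ᴴ * (B * N)).trace = 0 := by
      have : (B * N)ᴴ * (B * N) = Nᴴ * (ρ * N) := by
        simp only [Matrix.conjTranspose_mul, hB, Matrix.mul_assoc]
      rw [this, Matrix.trace_mul_comm, Matrix.mul_assoc, hNH, hNN]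
      rw [hN1, Matrix.mul_sub, Matrix.mul_one, Matrix.trace_sub, htr, hQtr, sub_self]
    have hBN : B * N = 0 := aux_trace_zero _ h0
    rw [hB, Matrix.mul_assoc, hBN, Matrix.mul_zero]
  have hNρ : N * ρ = 0 := by
    have := congrArg Matrix.conjTranspose hρN
    rwa [Matrix.conjTranspose_mul, hNH, hpos.isHermitian.eq, Matrix.conjTranspose_zero] at this
  have hr : ρ = ρ * (Q ⊗ₖ (1 : Matrix n n ℂ)) := by
    have := hρN
    rw [hN1, Matrix.mul_sub, Matrix.mul_one, sub_eq_zero] at this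
    exact this
  have hl : ρ = (Q ⊗ₖ (1 : Matrix n n ℂ)) * ρ := by
    have := hNρ
    rw [hN1, Matrix.sub_mul, Matrix.one_mul, sub_eq_zero] at this
    exact this
  -- entrywise consequences
  have keyR : ∀ (a i : m) (b j : n),
      ρ (a, b) (i, j) = star (v i) * ∑ k : m, ρ (a, b) (k, j) * v k := by
    intro a i b j
    have := congrFun (congrFun hr (a, b)) (i, j)
    rw [Matrix.mul_apply] at this
    rw [this]
    rw [Fintype.sum_prod_type]
    simp only [Matrix.kroneckerMap_apply, Matrix.one_apply, hQdef, Matrix.vecMulVec_apply,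
      Pi.star_apply, mul_ite, mul_one, mul_zero, Finset.sum_ite_eq, Finset.sum_ite_eq',
      Finset.mem_univ, if_true]
    rw [Finset.mul_sum]
    exact Finset.sum_congr rfl fun k _ => by ring
  have keyL : ∀ (a i : m) (b j : n),
      ρ (a, b) (i, j) = v a * ∑ k : m, star (v k) * ρ (k, b) (i, j) := by
    intro a i b j
    have := congrFun (congrFun hl (a, b)) (i, j)
    rw [Matrix.mul_apply] at this
    rw [this]
    rw [Fintype.sum_prod_type]
    simp only [Matrix.kroneckerMap_apply, Matrix.one_apply, hQdef, Matrix.vecMulVec_apply,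
      Pi.star_apply, ite_mul, one_mul, zero_mul, mul_ite, mul_one, mul_zero,
      Finset.sum_ite_eq, Finset.sum_ite_eq', Finset.mem_univ, if_true]
    rw [Finset.mul_sum]
    exact Finset.sum_congr rfl fun k _ => by ring
  -- the B-marginal factor
  set S : n → n → ℂ := fun b j => ∑ k : m, ∑ k' : m, star (v k) * (ρ (k, b) (k', j) * v k')
    with hSdef
  have key : ∀ (a i : m) (b j : n), ρ (a, b) (i, j) = v a * star (v i) * S b j := by
    intro a i b j
    rw [keyL a i b j]
    have : ∀ k : m, ρ (k, b) (i, j) = star (v i) * ∑ k' : m, ρ (k, b) (k', j) * v k' :=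
      fun k => keyR k i b j
    simp_rw [this]
    rw [hSdef]
    simp only [Finset.mul_sum]
    exact Finset.sum_congr rfl fun k _ => Finset.sum_congr rfl fun k' _ => by ring
  intro i i' j j'
  rw [hA i i']
  have hS : (∑ k : m, ρ (k, j) (k, j')) = S j j' := by
    calc ∑ k : m, ρ (k, j) (k, j') = ∑ k : m, v k * star (v k) * S j j' :=
          Finset.sum_congr rfl fun k _ => key k k j j'
      _ = (∑ k : m, star (v k) * v k) * S j j' := by
          rw [Finset.sum_mul]; exact Finset.sum_congr rfl fun k _ => by ring
      _ = S j j' := by rw [hvv, one_mul]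
  rw [hS, key i i' j j']
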